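/- In the Lawvere theory P_f(O) associated to a regular operad O, every isomorphism n → n is represented by a unique span (φ, ⟨1_n, a_1,…,a_n⟩) where φ : Fin n → Fin n is a bijection and each a_i ∈ O_1 is invertible (i.e., there is b_i ∈ O_1 with a_i ∗ b_i = ι = b_i ∗ a_i). -/

import Mathlib

/-- The lexicographic bijection `(Σ i, Fin (n i)) ≃ Fin (∑ i, n i)`. -/
noncomputable def finSigmaEquiv {m : ℕ} (n : Fin m → ℕ) : (Σ i, Fin (n i)) ≃ Fin (∑ i, n i) :=
  toLex.trans (monoEquivOfFin (Lex (Σ i, Fin (n i))) (by simp [Fintype.card_sigma])).symm.toEquiv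

/-- A regular operad: a family of sets of operations with a unit, an associative
multiplication, and a compatible left action of surjections of finite sets. -/
structure RegularOperad where
  ops : ℕ → Type
  unit : ops 1
  act : ∀ {n m : ℕ} (φ : Fin n → Fin m), Function.Surjective φ → ops n → ops m
  comp : ∀ {k N : ℕ} (n : Fin k → ℕ), (∑ i, n i) = N → (∀ i, ops (n i)) → ops k → ops N
  act_id : ∀ {n : ℕ} (a : ops n), act id Function.surjective_id a = a
  act_act : ∀ {n m l : ℕ} (φ : Fin n → Fin m) (hφ : Function.Surjective φ)
      (ψ : Fin m → Fin l) (hψ : Function.Surjective ψ) (a : ops n),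
      act ψ hψ (act φ hφ a) = act (ψ ∘ φ) (hψ.comp hφ) a
  comp_unit : ∀ {k : ℕ} (a : ops k),
      comp (fun _ : Fin k => 1) (by simp) (fun _ => unit) a = a
  unit_comp : ∀ {n : ℕ} (a : ops n),
      comp (fun _ : Fin 1 => n) (by simp) (fun _ => a) unit = a
  assoc : ∀ {k N M : ℕ} (n : Fin k → ℕ) (hN : (∑ i, n i) = N)
      (m : Fin N → ℕ) (hM : (∑ j, m j) = M)
      (c : ∀ j, ops (m j)) (b : ∀ i, ops (n i)) (a : ops k)
      (hsum : (∑ i, ∑ j : Fin (n i), m (Fin.cast hN (finSigmaEquiv n ⟨i, j⟩))) = M),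
      comp m hM c (comp n hN b a) =
      comp (fun i => ∑ j : Fin (n i), m (Fin.cast hN (finSigmaEquiv n ⟨i, j⟩))) hsum
        (fun i => comp (fun j : Fin (n i) => m (Fin.cast hN (finSigmaEquiv n ⟨i, j⟩))) rfl
          (fun j => c (Fin.cast hN (finSigmaEquiv n ⟨i, j⟩))) (b i)) a

/-- A span representing a morphism `n → m` in the Lawvere theory `P_f(O)`:
for each `i < m` a block of inputs of size `r i` carrying an operation `op i`,
together with an amalgamation map to `Fin n` which is injective on each block. -/
structure SpanRep (ops : ℕ → Type) (n m : ℕ) where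
  r : Fin m → ℕ
  amal : (Σ i : Fin m, Fin (r i)) → Fin n
  fiber_inj : ∀ i : Fin m, Function.Injective (fun j : Fin (r i) => amal ⟨i, j⟩)
  op : ∀ i, ops (r i)

/-- The equivalence identifying spans which differ by fiberwise permutations
acting simultaneously on the amalgamation and the operations. -/
def SpanEquiv (O : RegularOperad) {n m : ℕ} (s t : SpanRep O.ops n m) : Prop :=
  ∃ σ : ∀ i, Fin (s.r i) ≃ Fin (t.r i),
    (∀ i j, s.amal ⟨i, j⟩ = t.amal ⟨i, σ i j⟩) ∧
    (∀ i, O.act (σ i) (σ i).surjective (s.op i) = t.op i)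

/-- `u` represents the composite of the spans `s : n → m` and `t : m → k`
(in diagrammatic order): it is obtained from the pullback-composite by
regularization along blockwise surjections `α j`. -/
noncomputable def CompSpec (O : RegularOperad) {n m k : ℕ}
    (s : SpanRep O.ops n m) (t : SpanRep O.ops m k) (u : SpanRep O.ops n k) : Prop :=
  ∃ (α : ∀ j : Fin k,
      Fin (∑ l : Fin (t.r j), s.r (t.amal ⟨j, l⟩)) → Fin (u.r j))
    (hα : ∀ j, Function.Surjective (α j)),
    (∀ (j : Fin k) (x : Fin (∑ l : Fin (t.r j), s.r (t.amal ⟨j, l⟩))),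
      u.amal ⟨j, α j x⟩ =
        s.amal ⟨t.amal ⟨j, ((finSigmaEquiv _).symm x).1⟩, ((finSigmaEquiv _).symm x).2⟩) ∧
    (∀ j : Fin k,
      u.op j = O.act (α j) (hα j)
        (O.comp (fun l : Fin (t.r j) => s.r (t.amal ⟨j, l⟩)) rfl
          (fun l => s.op (t.amal ⟨j, l⟩)) (t.op j)))

/-- The identity span on `n`. -/
def idSpan (O : RegularOperad) (n : ℕ) : SpanRep O.ops n n where
  r := fun _ => 1
  amal := fun p => p.1
  fiber_inj := fun _ a b _ => Subsingleton.elim a b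
  op := fun _ => O.unit

/-- An invertible unary operation of a regular operad. -/
def IsInvertibleUnary (O : RegularOperad) (a : O.ops 1) : Prop :=
  ∃ b : O.ops 1,
    O.comp (fun _ : Fin 1 => 1) (by simp) (fun _ => b) a = O.unit ∧
    O.comp (fun _ : Fin 1 => 1) (by simp) (fun _ => a) b = O.unit


section Helpers

private theorem RegularOperad.act_one' {O : RegularOperad} {N : ℕ} (hN : N = 1)
    (φ : Fin N → Fin 1) (hφ : Function.Surjective φ) (a : O.ops N) :
    O.act φ hφ a = cast (congrArg O.ops hN) a := by
  subst hN
  have hφ' : φ = id := funext fun x => Subsingleton.elim _ _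
  subst hφ'
  rw [cast_eq]
  exact O.act_id a

private theorem RegularOperad.comp_hcongr (O : RegularOperad) {k k' N N' : ℕ}
    (hk : k = k') (hN : N = N')
    {n : Fin k → ℕ} {n' : Fin k' → ℕ} (hn : HEq n n')
    {h1 : (∑ i, n i) = N} {h2 : (∑ i, n' i) = N'}
    {b : ∀ i, O.ops (n i)} {b' : ∀ i, O.ops (n' i)} (hb : HEq b b')
    {a : O.ops k} {a' : O.ops k'} (ha : HEq a a') :
    HEq (O.comp n h1 b a) (O.comp n' h2 b' a') := by
  subst hk; subst hN; cases hn; cases hb; cases ha; rfl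

private theorem RegularOperad.act_congr (O : RegularOperad) {n m : ℕ}
    {φ ψ : Fin n → Fin m} (h : φ = ψ) (hφ : Function.Surjective φ)
    (hψ : Function.Surjective ψ) (a : O.ops n) : O.act φ hφ a = O.act ψ hψ a := by
  subst h; rfl

private theorem heq_fun_nat {k : ℕ} (hk : k = 1) (f : Fin k → ℕ) (c : ℕ)
    (hf : ∀ i, f i = c) : HEq f (fun _ : Fin 1 => c) := by
  subst hk; exact heq_of_eq (funext hf)

private theorem heq_fun_ops (O : RegularOperad) {k : ℕ} (hk : k = 1)
    (m : Fin k → ℕ) (hm : ∀ i, m i = 1)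
    (b : ∀ i, O.ops (m i)) (c : O.ops 1) (hc : ∀ i, HEq (b i) c) :
    HEq b (fun _ : Fin 1 => c) := by
  subst hk
  have hm' : m = fun _ => 1 := funext hm
  subst hm'
  exact heq_of_eq (funext fun i => eq_of_heq (hc i))

private theorem SpanRep.ext' {ops : ℕ → Type} {n m : ℕ} {s t : SpanRep ops n m}
    (hr : s.r = t.r) (ha : HEq s.amal t.amal) (ho : HEq s.op t.op) : s = t := by
  cases s; cases t
  cases hr; cases ha; cases ho; rfl

end Helpers

/-- In the Lawvere theory `P_f(O)` of a regular operad `O`, every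
isomorphism `n → n` is represented by a unique span whose blocks all have size 1,
whose amalgamation is a bijection, and whose unary operations are invertible;
moreover this span is the unique member of its equivalence class. -/
theorem iso_span_form (O : RegularOperad) (n : ℕ) (s : SpanRep O.ops n n)
    (hiso : ∃ (t u v : SpanRep O.ops n n),
      CompSpec O s t u ∧ SpanEquiv O u (idSpan O n) ∧
      CompSpec O t s v ∧ SpanEquiv O v (idSpan O n)) :
    (∀ i, s.r i = 1) ∧
    Function.Bijective (fun p : Σ i : Fin n, Fin (s.r i) => s.amal p) ∧
    (∀ (i : Fin n) (h : s.r i = 1),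
      IsInvertibleUnary O (cast (congrArg O.ops h) (s.op i))) ∧
    (∀ s' : SpanRep O.ops n n, SpanEquiv O s s' → s' = s) := by
  obtain ⟨t, u, v, ⟨α, hα, hAu, hOu⟩, ⟨σu, hσuA, hσuO⟩, ⟨β, hβ, hAv, hOv⟩, ⟨σv, hσvA, hσvO⟩⟩ := hiso
  -- block sizes of u and v are 1
  have hu1 : ∀ i, u.r i = 1 := fun i => by
    exact Fin.equiv_iff_eq.mp ⟨σu i⟩
  have hv1 : ∀ i, v.r i = 1 := fun i => by
    exact Fin.equiv_iff_eq.mp ⟨σv i⟩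
  -- key amalgamation identities
  have A : ∀ (j : Fin n) (l : Fin (t.r j)) (p : Fin (s.r (t.amal ⟨j, l⟩))),
      s.amal ⟨t.amal ⟨j, l⟩, p⟩ = j := by
    intro j l p
    have h1 := hAu j ((finSigmaEquiv _) ⟨l, p⟩)
    rw [Equiv.symm_apply_apply] at h1
    have h2 := hσuA j (α j ((finSigmaEquiv _) ⟨l, p⟩))
    simp only [idSpan] at h2
    rw [h2] at h1
    exact h1.symm
  have B : ∀ (j : Fin n) (l : Fin (s.r j)) (p : Fin (t.r (s.amal ⟨j, l⟩))),
      t.amal ⟨s.amal ⟨j, l⟩, p⟩ = j := by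
    intro j l p
    have h1 := hAv j ((finSigmaEquiv _) ⟨l, p⟩)
    rw [Equiv.symm_apply_apply] at h1
    have h2 := hσvA j (β j ((finSigmaEquiv _) ⟨l, p⟩))
    simp only [idSpan] at h2
    rw [h2] at h1
    exact h1.symm
  -- nonempty fibers
  have hxu : ∀ j : Fin n, Nonempty (Σ l : Fin (t.r j), Fin (s.r (t.amal ⟨j, l⟩))) := by
    intro j
    obtain ⟨x, -⟩ := hα j ⟨0, by rw [hu1 j]; omega⟩
    exact ⟨(finSigmaEquiv _).symm x⟩
  have hxv : ∀ j : Fin n, Nonempty (Σ l : Fin (s.r j), Fin (t.r (s.amal ⟨j, l⟩))) := by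
    intro j
    obtain ⟨x, -⟩ := hβ j ⟨0, by rw [hv1 j]; omega⟩
    exact ⟨(finSigmaEquiv _).symm x⟩
  have htpos : ∀ j, 0 < t.r j := fun j => (hxu j).elim fun y => y.1.pos
  have hspos : ∀ j, 0 < s.r j := fun j => (hxv j).elim fun y => y.1.pos
  -- s.amal is bijective
  have hsurj : Function.Surjective (fun p : Σ i : Fin n, Fin (s.r i) => s.amal p) := by
    intro j
    obtain ⟨y⟩ := hxu j
    exact ⟨⟨t.amal ⟨j, y.1⟩, y.2⟩, A j y.1 y.2⟩
  have hinj : Function.Injective (fun p : Σ i : Fin n, Fin (s.r i) => s.amal p) := by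
    rintro ⟨i, l⟩ ⟨i', l'⟩ h
    simp only at h
    have hi : i = i' :=
      (B i l ⟨0, htpos _⟩).symm.trans
        ((congrArg (fun z : Fin n => t.amal ⟨z, ⟨0, htpos z⟩⟩) h).trans (B i' l' ⟨0, htpos _⟩))
    subst hi
    have hl : l = l' := s.fiber_inj i h
    rw [hl]
  have hbij : Function.Bijective (fun p : Σ i : Fin n, Fin (s.r i) => s.amal p) := ⟨hinj, hsurj⟩
  -- all blocks of s have size 1
  have hcard : (∑ i, s.r i) = n := by
    have := Fintype.card_of_bijective hbij
    simpa [Fintype.card_sigma] using this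
  have hs1 : ∀ i, s.r i = 1 := by
    intro i
    have hle : ∀ j ∈ Finset.univ, 1 ≤ s.r j := fun j _ => hspos j
    have hsum : (∑ j : Fin n, (1 : ℕ)) = ∑ j, s.r j := by
      rw [hcard]; simp
    exact ((Finset.sum_eq_sum_iff_of_le hle).mp hsum i (Finset.mem_univ i)).symm
  -- all blocks of t have size 1
  have ht1 : ∀ i, t.r i = 1 := by
    intro i
    rcases lt_or_ge (t.r i) 2 with h | h
    · have := htpos i; omega
    · exfalso
      obtain ⟨⟨j, l⟩, hjl⟩ := hsurj i
      simp only at hjl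
      subst hjl
      have e1 := B j l ⟨0, by omega⟩
      have e2 := B j l ⟨1, by omega⟩
      have := t.fiber_inj (s.amal ⟨j, l⟩) (e1.trans e2.symm)
      simp at this
  -- normalized unary operations
  let SA : Fin n → O.ops 1 := fun i => cast (congrArg O.ops (hs1 i)) (s.op i)
  let TA : Fin n → O.ops 1 := fun i => cast (congrArg O.ops (ht1 i)) (t.op i)
  have q0 : ∀ j : Fin n, Fin (t.r j) := fun j => ⟨0, htpos j⟩
  have p0 : ∀ j : Fin n, Fin (s.r j) := fun j => ⟨0, hspos j⟩
  -- first composite identity: plugging SA into TA gives the unit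
  have E1 : ∀ j : Fin n,
      O.comp (fun _ : Fin 1 => 1) (by simp) (fun _ => SA (t.amal ⟨j, q0 j⟩)) (TA j) = O.unit := by
    intro j
    have hNj : (∑ l : Fin (t.r j), s.r (t.amal ⟨j, l⟩)) = 1 := by
      simp [hs1, ht1]
    have h1 := hOu j
    have h2 := hσuO j
    rw [h1, O.act_act] at h2
    simp only [idSpan] at h2
    rw [RegularOperad.act_one' hNj] at h2
    have hbig : HEq (O.comp (fun l : Fin (t.r j) => s.r (t.amal ⟨j, l⟩)) rfl
        (fun l => s.op (t.amal ⟨j, l⟩)) (t.op j)) O.unit := by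
      rw [← h2]
      exact (cast_heq _ _).symm
    have hsmall : HEq
        (O.comp (fun l : Fin (t.r j) => s.r (t.amal ⟨j, l⟩)) rfl
          (fun l => s.op (t.amal ⟨j, l⟩)) (t.op j))
        (O.comp (fun _ : Fin 1 => 1) (by simp : (∑ _ : Fin 1, (1:ℕ)) = 1)
          (fun _ => SA (t.amal ⟨j, q0 j⟩)) (TA j)) := by
      refine O.comp_hcongr (ht1 j) hNj ?_ ?_ ?_
      · exact heq_fun_nat (ht1 j) _ 1 (fun l => hs1 _)
      · refine heq_fun_ops O (ht1 j) _ (fun l => hs1 _) _ _ (fun l => ?_)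
        have hl : l = q0 j := by
          apply Fin.ext
          have := l.isLt
          have := ht1 j
          omega
        rw [hl]
        exact (cast_heq _ _).symm
      · exact (cast_heq _ _).symm
    exact eq_of_heq (hsmall.symm.trans hbig)
  -- second composite identity: plugging TA into SA gives the unit
  have E2 : ∀ j : Fin n,
      O.comp (fun _ : Fin 1 => 1) (by simp) (fun _ => TA (s.amal ⟨j, p0 j⟩)) (SA j) = O.unit := by
    intro j
    have hNj : (∑ l : Fin (s.r j), t.r (s.amal ⟨j, l⟩)) = 1 := by
      simp [hs1, ht1]
    have h1 := hOv j
    have h2 := hσvO j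
    rw [h1, O.act_act] at h2
    simp only [idSpan] at h2
    rw [RegularOperad.act_one' hNj] at h2
    have hbig : HEq (O.comp (fun l : Fin (s.r j) => t.r (s.amal ⟨j, l⟩)) rfl
        (fun l => t.op (s.amal ⟨j, l⟩)) (s.op j)) O.unit := by
      rw [← h2]
      exact (cast_heq _ _).symm
    have hsmall : HEq
        (O.comp (fun l : Fin (s.r j) => t.r (s.amal ⟨j, l⟩)) rfl
          (fun l => t.op (s.amal ⟨j, l⟩)) (s.op j))
        (O.comp (fun _ : Fin 1 => 1) (by simp : (∑ _ : Fin 1, (1:ℕ)) = 1)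
          (fun _ => TA (s.amal ⟨j, p0 j⟩)) (SA j)) := by
      refine O.comp_hcongr (hs1 j) hNj ?_ ?_ ?_
      · exact heq_fun_nat (hs1 j) _ 1 (fun l => ht1 _)
      · refine heq_fun_ops O (hs1 j) _ (fun l => ht1 _) _ _ (fun l => ?_)
        have hl : l = p0 j := by
          apply Fin.ext
          have := l.isLt
          have := hs1 j
          omega
        rw [hl]
        exact (cast_heq _ _).symm
      · exact (cast_heq _ _).symm
    exact eq_of_heq (hsmall.symm.trans hbig)
  refine ⟨hs1, hbij, ?_, ?_⟩
  · -- invertibility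
    intro i h
    refine ⟨TA (s.amal ⟨i, p0 i⟩), E2 i, ?_⟩
    have e := E1 (s.amal ⟨i, p0 i⟩)
    rw [show t.amal ⟨s.amal ⟨i, p0 i⟩, q0 (s.amal ⟨i, p0 i⟩)⟩ = i from B i (p0 i) _] at e
    exact e
  · -- uniqueness in the equivalence class
    rintro ⟨r', amal', fi', op'⟩ ⟨σ, hA', hO'⟩
    have hr' : r' = s.r := by
      funext i
      have h1 : s.r i = r' i := by simpa using Fintype.card_congr (σ i)
      rw [← h1]
    subst hr'
    refine SpanRep.ext' rfl ?_ ?_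
    · refine heq_of_eq (funext fun p => ?_)
      obtain ⟨i, l⟩ := p
      have hσl : σ i l = l := by
        apply Fin.ext
        have h1 : ((σ i) l).val < s.r i := ((σ i) l).isLt
        have h2 : l.val < s.r i := l.isLt
        have h3 := hs1 i
        omega
      have h4 := hA' i l
      rw [hσl] at h4
      exact h4.symm
    · refine heq_of_eq (funext fun i => ?_)
      show op' i = s.op i
      have hσi : ⇑(σ i) = id := by
        funext x
        apply Fin.ext
        have h1 : ((σ i) x).val < s.r i := ((σ i) x).isLt
        have h2 : x.val < s.r i := x.isLt
        have h3 := hs1 i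
        simp only [id_eq]
        omega
      have h5 : O.act (⇑(σ i)) (σ i).surjective (s.op i) = op' i := hO' i
      rw [← h5, O.act_congr hσi _ Function.surjective_id, O.act_id]
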